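/- For all integers k, n ≥ 2, the restricted size Ramsey number of the star versus the clique satisfies: r̂*(K_{1,k}, K_n) = C(k(n−1)+1, 2) − C(k, 2) if k ≥ n or k is odd, and r̂*(K_{1,k}, K_n) = C(k(n−1)+1, 2) − k(n−1)/2 otherwise (i.e., when k is even and k < n). -/

import Mathlib

open SimpleGraph

/-- `H` contains a copy of `G`, i.e. there is an injective graph homomorphism `G →g H`. -/
def ContainsCopy {α β : Type*} (G : SimpleGraph α) (H : SimpleGraph β) : Prop :=
  ∃ f : G →g H, Function.Injective f

/-- `F ⟶ (G, H)` : for every red-blue colouring of the edges of `F` (encoded by the red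
subgraph `R ≤ F`, the blue edges being `F \ R`) there is a red copy of `G` or a blue copy
of `H`. -/
def Arrows {γ α β : Type*} (F : SimpleGraph γ) (G : SimpleGraph α) (H : SimpleGraph β) : Prop :=
  ∀ R : SimpleGraph γ, R ≤ F → ContainsCopy G R ∨ ContainsCopy H (F \ R)

/-- The Ramsey number `r(G, H)` : the least `n` such that `K_n ⟶ (G, H)`. -/
noncomputable def ramseyNumber {α β : Type*} (G : SimpleGraph α) (H : SimpleGraph β) : ℕ :=
  sInf {n : ℕ | Arrows (⊤ : SimpleGraph (Fin n)) G H}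

/-- The size Ramsey number `r̂(G, H)` : the least number of edges of a graph `F` with
`F ⟶ (G, H)`. -/
noncomputable def sizeRamsey {α β : Type*} (G : SimpleGraph α) (H : SimpleGraph β) : ℕ :=
  sInf {m : ℕ | ∃ (N : ℕ) (F : SimpleGraph (Fin N)), Arrows F G H ∧ F.edgeSet.ncard = m}

/-- The restricted size Ramsey number `r̂*(G, H)` : the least number of edges of a graph `F`
on exactly `r(G, H)` vertices with `F ⟶ (G, H)`. -/
noncomputable def restrictedSizeRamsey {α β : Type*} (G : SimpleGraph α) (H : SimpleGraph β) : ℕ :=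
  sInf {m : ℕ | ∃ F : SimpleGraph (Fin (ramseyNumber G H)),
    Arrows F G H ∧ F.edgeSet.ncard = m}

/-- The star `K_{1,k}` with `k` edges. -/
def starGraph (k : ℕ) : SimpleGraph (Fin 1 ⊕ Fin k) := completeBipartiteGraph (Fin 1) (Fin k)


open Finset

open scoped Classical

variable {V : Type*} [Fintype V] [DecidableEq V]

/-- Red star copy from a high-degree vertex. -/
lemma starGraph_adj {k : ℕ} (x y : Fin 1 ⊕ Fin k) :
    (_root_.starGraph k).Adj x y ↔ (x.isLeft ∧ y.isRight ∨ x.isRight ∧ y.isLeft) := Iff.rfl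

lemma copy_star_of_degree {R : SimpleGraph V} {k : ℕ} (v : V) (t : Finset V)
    (h : k ≤ t.card) (hadjt : ∀ w ∈ t, R.Adj v w) : ContainsCopy (_root_.starGraph k) R := by
  obtain ⟨t', ht, htc⟩ := Finset.exists_subset_card_eq h
  have e : Fin k ≃ t' := (Fintype.equivFinOfCardEq (by rw [Fintype.card_coe, htc])).symm
  have hmem : ∀ i : Fin k, R.Adj v (e i : V) := fun i => hadjt _ (ht (e i).2)
  let fn : Fin 1 ⊕ Fin k → V := Sum.elim (fun _ => v) (fun i => (e i : V))
  have hadj : ∀ {x y : Fin 1 ⊕ Fin k}, (_root_.starGraph k).Adj x y → R.Adj (fn x) (fn y) := by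
    rintro (a | a) (b | b) hab
    · simp [_root_.starGraph_adj] at hab
    · exact hmem b
    · exact (hmem a).symm
    · simp [_root_.starGraph_adj] at hab
  have hinj : Function.Injective fn := by
    rintro (a | a) (b | b) hab
    · simp [Subsingleton.elim a b]
    · exact absurd hab (hmem b).ne
    · exact absurd hab.symm (hmem a).ne
    · exact congrArg Sum.inr (e.injective (Subtype.ext hab))
  exact ⟨⟨fn, hadj⟩, hinj⟩

/-- A red star copy yields a vertex with k distinct neighbours. -/
lemma degree_of_copy_star {R : SimpleGraph V} {k : ℕ}
    (h : ContainsCopy (_root_.starGraph k) R) :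
    ∃ (v : V) (t : Finset V), t.card = k ∧ ∀ w ∈ t, R.Adj v w := by
  obtain ⟨f, hf⟩ := h
  refine ⟨f (Sum.inl 0), (univ : Finset (Fin k)).image (fun i => f (Sum.inr i)), ?_, ?_⟩
  · rw [Finset.card_image_of_injective _ (fun a b hab => Sum.inr.inj (hf hab))]
    simp
  · intro w hw
    obtain ⟨i, _, rfl⟩ := Finset.mem_image.1 hw
    exact f.map_adj (by simp [_root_.starGraph_adj])

/-- A blue clique copy from a finset of pairwise adjacent vertices. -/
lemma copy_clique_of_finset {B : SimpleGraph V} {n : ℕ} (s : Finset V) (hcard : n ≤ s.card)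
    (h : ∀ u ∈ s, ∀ w ∈ s, u ≠ w → B.Adj u w) :
    ContainsCopy (⊤ : SimpleGraph (Fin n)) B := by
  obtain ⟨t, ht, htc⟩ := Finset.exists_subset_card_eq hcard
  have e : Fin n ≃ t := (Fintype.equivFinOfCardEq (by rw [Fintype.card_coe, htc])).symm
  let fn : Fin n → V := fun i => (e i : V)
  have hinj : Function.Injective fn := fun a b hab => e.injective (Subtype.ext hab)
  have hadj : ∀ {x y : Fin n}, (⊤ : SimpleGraph (Fin n)).Adj x y → B.Adj (fn x) (fn y) := by
    intro x y hxy
    simp only [top_adj] at hxy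
    exact h _ (ht (e x).2) _ (ht (e y).2) (fun hh => hxy (hinj hh))
  exact ⟨⟨fn, hadj⟩, hinj⟩


/-- Existence of a maximal independent subset of `s`. -/
lemma exists_maximal_indep (M : SimpleGraph V) (s : Finset V) :
    ∃ I ⊆ s, (∀ u ∈ I, ∀ w ∈ I, ¬ M.Adj u w) ∧
      (∀ v ∈ s, v ∉ I → ∃ w ∈ I, M.Adj v w) := by
  set 𝒜 := s.powerset.filter (fun t => ∀ u ∈ t, ∀ w ∈ t, ¬ M.Adj u w) with h𝒜
  have hne : 𝒜.Nonempty := ⟨∅, by simp [h𝒜]⟩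
  obtain ⟨I, hI, hmax⟩ := Finset.exists_max_image 𝒜 Finset.card hne
  simp only [h𝒜, Finset.mem_filter, Finset.mem_powerset] at hI
  refine ⟨I, hI.1, hI.2, ?_⟩
  intro v hv hvI
  by_contra hno
  push_neg at hno
  have hmem : insert v I ∈ 𝒜 := by
    simp only [h𝒜, Finset.mem_filter, Finset.mem_powerset]
    refine ⟨Finset.insert_subset hv hI.1, ?_⟩
    intro u hu w hw
    by_cases huv : u = v <;> by_cases hwv : w = v
    · subst huv; subst hwv; exact M.loopless.irrefl _
    · subst huv; exact hno w ((Finset.mem_insert.1 hw).resolve_left hwv)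
    · subst hwv; exact fun h => hno u ((Finset.mem_insert.1 hu).resolve_left huv) h.symm
    · exact hI.2 u ((Finset.mem_insert.1 hu).resolve_left huv) w
        ((Finset.mem_insert.1 hw).resolve_left hwv)
  have := hmax _ hmem
  rw [Finset.card_insert_of_notMem hvI] at this
  omega

/-- Covering bound: if every vertex of X is in I or adjacent to a member of I. -/
lemma cover_card_le (M : SimpleGraph V) (I X : Finset V) (D : ℕ)
    (hdeg : ∀ v, (univ.filter (M.Adj v)).card ≤ D)
    (hcov : ∀ v ∈ X, v ∈ I ∨ ∃ w ∈ I, M.Adj w v) :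
    X.card ≤ I.card * (D + 1) := by
  have hsub : X ⊆ I ∪ I.biUnion (fun w => univ.filter (M.Adj w)) := by
    intro v hv
    rcases hcov v hv with h | ⟨w, hw, hadj⟩
    · exact Finset.mem_union_left _ h
    · exact Finset.mem_union_right _ (Finset.mem_biUnion.2 ⟨w, hw, by simp [hadj]⟩)
  calc X.card ≤ _ := Finset.card_le_card hsub
    _ ≤ I.card + (I.biUnion (fun w => univ.filter (M.Adj w))).card := Finset.card_union_le _ _
    _ ≤ I.card + ∑ w ∈ I, (univ.filter (M.Adj w)).card := by
        exact Nat.add_le_add_left (Finset.card_biUnion_le) _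
    _ ≤ I.card + I.card * D := by
        refine Nat.add_le_add_left ?_ _
        calc ∑ w ∈ I, (univ.filter (M.Adj w)).card ≤ ∑ _w ∈ I, D :=
              Finset.sum_le_sum (fun w _ => hdeg w)
          _ = I.card * D := by rw [Finset.sum_const, smul_eq_mul]
    _ = I.card * (D + 1) := by ring

/-- KEY lemma: blue independent set of size n avoiding double-S. -/
lemma key_indep {k n N : ℕ} (hk : 2 ≤ k) (hn : 2 ≤ n) (hN : N = k*(n-1)+1)
    (S : Finset (Fin N)) (hS : S.card ≤ k) (R : SimpleGraph (Fin N))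
    (hdeg : ∀ v, (univ.filter (R.Adj v)).card ≤ k - 1) :
    ∃ I : Finset (Fin N), I.card = n ∧
      ∀ u ∈ I, ∀ w ∈ I, u ≠ w → ¬ R.Adj u w ∧ ¬(u ∈ S ∧ w ∈ S) := by
  have hk1 : k - 1 + 1 = k := by omega
  set W : Finset (Fin N) := univ \ S with hW
  obtain ⟨I₀, hI₀W, hind, hmaxI⟩ := exists_maximal_indep R W
  have hWcard : W.card = N - S.card := by
    rw [hW, Finset.card_sdiff_of_subset (Finset.subset_univ S), Finset.card_univ, Fintype.card_fin]
  have hbound1 : W.card ≤ I₀.card * k := by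
    have := cover_card_le R I₀ W (k-1) hdeg (fun v hv => by
      by_cases h : v ∈ I₀
      · exact Or.inl h
      · obtain ⟨w, hw, hadj⟩ := hmaxI v hv h
        exact Or.inr ⟨w, hw, hadj.symm⟩)
    rwa [hk1] at this
  have hn1 : n - 1 ≤ I₀.card := by
    by_contra hlt
    push_neg at hlt
    have h1 : I₀.card * k ≤ (n-2) * k := Nat.mul_le_mul_right k (by omega)
    have h2 : N - k ≤ W.card := by omega
    have h3 : k * (n-1) = k * (n-2) + k := by
      have : n - 1 = (n-2) + 1 := by omega
      rw [this, Nat.mul_succ]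
    have h4 : (n-2)*k = k*(n-2) := Nat.mul_comm _ _
    omega
  by_cases hbig : n ≤ I₀.card
  · obtain ⟨t, htsub, htc⟩ := Finset.exists_subset_card_eq hbig
    refine ⟨t, htc, ?_⟩
    intro u hu w hw _
    have huW := hI₀W (htsub hu)
    refine ⟨hind u (htsub hu) w (htsub hw), ?_⟩
    rw [hW, Finset.mem_sdiff] at huW
    exact fun hc => huW.2 hc.1
  · -- I₀.card = n - 1
    have hIc : I₀.card = n - 1 := by omega
    by_cases hfree : ∃ s₀ ∈ S, ∀ w ∈ I₀, ¬ R.Adj s₀ w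
    · obtain ⟨s₀, hs₀S, hs₀⟩ := hfree
      have hs₀I : s₀ ∉ I₀ := fun h => by
        have := hI₀W h
        rw [hW, Finset.mem_sdiff] at this
        exact this.2 hs₀S
      refine ⟨insert s₀ I₀, by rw [Finset.card_insert_of_notMem hs₀I, hIc]; omega, ?_⟩
      intro u hu w hw hne
      have hWS : ∀ x ∈ I₀, x ∉ S := fun x hx => by
        have := hI₀W hx; rw [hW, Finset.mem_sdiff] at this; exact this.2
      by_cases hus : u = s₀ <;> by_cases hws : w = s₀
      · exact absurd (hus.trans hws.symm) hne
      · subst hus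
        have hwI := (Finset.mem_insert.1 hw).resolve_left hws
        exact ⟨hs₀ w hwI, fun hc => hWS w hwI hc.2⟩
      · subst hws
        have huI := (Finset.mem_insert.1 hu).resolve_left hus
        exact ⟨fun h => hs₀ u huI h.symm, fun hc => hWS u huI hc.1⟩
      · have huI := (Finset.mem_insert.1 hu).resolve_left hus
        have hwI := (Finset.mem_insert.1 hw).resolve_left hws
        exact ⟨hind u huI w hwI, fun hc => hWS u huI hc.1⟩
    · push_neg at hfree
      exfalso
      have hcovall : ∀ v ∈ (univ : Finset (Fin N)), v ∈ I₀ ∨ ∃ w ∈ I₀, R.Adj w v := by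
        intro v _
        by_cases hvS : v ∈ S
        · obtain ⟨w, hw, hadj⟩ := hfree v hvS
          exact Or.inr ⟨w, hw, hadj.symm⟩
        · by_cases h : v ∈ I₀
          · exact Or.inl h
          · obtain ⟨w, hw, hadj⟩ := hmaxI v (by rw [hW, Finset.mem_sdiff]; exact ⟨Finset.mem_univ v, hvS⟩) h
            exact Or.inr ⟨w, hw, hadj.symm⟩
      have := cover_card_le R I₀ univ (k-1) hdeg hcovall
      rw [hk1, Finset.card_univ, Fintype.card_fin, hIc] at this
      have hcomm : (n-1)*k = k*(n-1) := Nat.mul_comm _ _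
      omega


/-- A set all of whose vertices are matched within it (by a max-degree-1 graph) is even. -/
lemma even_matched (P : SimpleGraph V) (hP : ∀ v, (univ.filter (P.Adj v)).card ≤ 1) :
    ∀ A : Finset V, (∀ v ∈ A, ∃ u ∈ A, P.Adj v u) → Even A.card := by
  intro A
  induction A using Finset.strongInductionOn with
  | _ A ih =>
    intro hcov
    rcases A.eq_empty_or_nonempty with rfl | ⟨v, hv⟩
    · simp
    · obtain ⟨u, hu, hadj⟩ := hcov v hv
      have hvu : v ≠ u := hadj.ne
      have huniq : ∀ x, P.Adj v x → x = u := by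
        intro x hx
        have h1 : x ∈ univ.filter (P.Adj v) := by simp [hx]
        have h2 : u ∈ univ.filter (P.Adj v) := by simp [hadj]
        have := Finset.card_le_one.1 (hP v)
        exact this x h1 u h2
      have huniq' : ∀ x, P.Adj u x → x = v := by
        intro x hx
        have h1 : x ∈ univ.filter (P.Adj u) := by simp [hx]
        have h2 : v ∈ univ.filter (P.Adj u) := by simp [hadj.symm]
        exact Finset.card_le_one.1 (hP u) x h1 v h2
      set A' := A \ {v, u} with hA'
      have hsub : A' ⊂ A := by
        refine Finset.sdiff_ssubset ?_ (by simp)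
        intro x hx
        rcases Finset.mem_insert.1 hx with rfl | hx
        · exact hv
        · rw [Finset.mem_singleton.1 hx]; exact hu
      have hcov' : ∀ w ∈ A', ∃ x ∈ A', P.Adj w x := by
        intro w hw
        rw [hA', Finset.mem_sdiff] at hw
        obtain ⟨x, hx, hwx⟩ := hcov w hw.1
        refine ⟨x, ?_, hwx⟩
        rw [hA', Finset.mem_sdiff]
        refine ⟨hx, ?_⟩
        intro hmem
        rcases Finset.mem_insert.1 hmem with rfl | hmem
        · -- x = v : then w is a P-neighbor of v, so w = u; but w ∈ A' excludes u
          have : w = u := huniq w hwx.symm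
          exact hw.2 (by simp [this])
        · rw [Finset.mem_singleton.1 hmem] at hwx
          have : w = v := huniq' w hwx.symm
          exact hw.2 (by simp [this])
      have hcard : A.card = A'.card + 2 := by
        rw [hA', Finset.card_sdiff_of_subset (by
          intro x hx
          rcases Finset.mem_insert.1 hx with rfl | hx
          · exact hv
          · rw [Finset.mem_singleton.1 hx]; exact hu)]
        have h2 : ({v, u} : Finset V).card = 2 := by
          rw [Finset.card_insert_of_notMem (by simp [hvu]), Finset.card_singleton]
        rw [h2]
        have : 2 ≤ A.card := by
          have : ({v, u} : Finset V) ⊆ A := by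
            intro x hx
            rcases Finset.mem_insert.1 hx with rfl | hx
            · exact hv
            · rw [Finset.mem_singleton.1 hx]; exact hu
          calc 2 = ({v, u} : Finset V).card := h2.symm
            _ ≤ A.card := Finset.card_le_card this
        omega
      rw [hcard]
      obtain ⟨m, hm⟩ := ih A' hsub hcov'
      exact ⟨m + 1, by omega⟩

/-- Matching + bounded-degree independence lemma (k even). -/
lemma matching_indep {k : ℕ} (hk : 2 ≤ k) (hke : Even k)
    (P R : SimpleGraph V) (hP : ∀ v, (univ.filter (P.Adj v)).card ≤ 1)
    (hR : ∀ v, (univ.filter (R.Adj v)).card ≤ k - 1) :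
    ∀ s : Finset V, Odd s.card →
      ∃ I ⊆ s, (∀ u ∈ I, ∀ w ∈ I, ¬ P.Adj u w ∧ ¬ R.Adj u w) ∧ s.card ≤ k * I.card := by
  intro s
  induction s using Finset.strongInductionOn with
  | _ s ih =>
    intro hodd
    have hne : s.Nonempty := by
      rcases s.eq_empty_or_nonempty with rfl | h
      · simp at hodd
      · exact h
    -- find an unmatched vertex
    obtain ⟨w, hws, hwun⟩ : ∃ w ∈ s, ∀ u ∈ s, ¬ P.Adj w u := by
      by_contra hcon
      push_neg at hcon
      have : ∀ v ∈ s, ∃ u ∈ s, P.Adj v u := hcon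
      have := even_matched P hP s this
      rw [Nat.even_iff] at this
      rw [Nat.odd_iff] at hodd
      omega
    set Aw := s.filter (fun u => R.Adj w u) with hAw
    have hAwcard : Aw.card ≤ k - 1 := by
      refine le_trans (Finset.card_le_card ?_) (hR w)
      intro x hx
      simp only [hAw, Finset.mem_filter] at hx ⊢
      simp [hx.2]
    set T₀ : Finset V := insert w Aw with hT₀
    have hwAw : w ∉ Aw := by simp [hAw, R.loopless.irrefl w]
    have hT₀s : T₀ ⊆ s := by
      rw [hT₀]
      exact Finset.insert_subset hws (Finset.filter_subset _ _)
    have hT₀card : T₀.card ≤ k := by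
      rw [hT₀, Finset.card_insert_of_notMem hwAw]; omega
    by_cases hsT : s ⊆ T₀
    · -- base case : s is small
      refine ⟨{w}, by simpa using hws, ?_, ?_⟩
      · intro u hu x hx
        rw [Finset.mem_singleton.1 hu, Finset.mem_singleton.1 hx]
        exact ⟨P.loopless.irrefl w, R.loopless.irrefl w⟩
      · have : s.card ≤ k := le_trans (Finset.card_le_card hsT) hT₀card
        simpa using this
    · -- pick x to adjust parity if needed
      have hex : ∃ x ∈ s, x ∉ T₀ := by
        by_contra hcon
        push_neg at hcon
        exact hsT hcon
      obtain ⟨x, hxs, hxT₀⟩ := hex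
      obtain ⟨T, hTsub, hTcard, hTeven, hwT, hAwT⟩ :
          ∃ T ⊆ s, T.card ≤ k ∧ Even T.card ∧ w ∈ T ∧ Aw ⊆ T := by
        by_cases hpar : Even T₀.card
        · exact ⟨T₀, hT₀s, hT₀card, hpar, by simp [hT₀], by rw [hT₀]; exact Finset.subset_insert _ _⟩
        · refine ⟨insert x T₀, Finset.insert_subset hxs hT₀s, ?_, ?_, ?_, ?_⟩
          · rw [Finset.card_insert_of_notMem hxT₀]
            have : T₀.card ≤ k - 1 := by
              rcases Nat.even_or_odd T₀.card with h | h
              · exact absurd h hpar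
              · rcases hke with ⟨m, hm⟩
                rw [Nat.odd_iff] at h
                omega
            omega
          · rw [Finset.card_insert_of_notMem hxT₀]
            rw [Nat.even_add_one]
            exact hpar
          · exact Finset.mem_insert_of_mem (by simp [hT₀])
          · exact fun a ha => Finset.mem_insert_of_mem (by rw [hT₀]; exact Finset.mem_insert_of_mem ha)
      set s' := s \ T with hs'
      have hss' : s' ⊂ s := by
        refine Finset.sdiff_ssubset hTsub ⟨w, hwT⟩
      have hs'card : s'.card = s.card - T.card := by
        rw [hs', Finset.card_sdiff_of_subset hTsub]
      have hs'odd : Odd s'.card := by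
        rw [hs'card]
        rcases hodd with ⟨a, ha⟩
        rcases hTeven with ⟨b, hb⟩
        have hTle : T.card ≤ s.card := Finset.card_le_card hTsub
        refine ⟨a - b, by omega⟩
      obtain ⟨I', hI'sub, hI'ind, hI'card⟩ := ih s' hss' hs'odd
      have hwI' : w ∉ I' := fun h => by
        have := hI'sub h
        rw [hs', Finset.mem_sdiff] at this
        exact this.2 hwT
      refine ⟨insert w I', Finset.insert_subset hws (le_trans hI'sub (Finset.sdiff_subset)), ?_, ?_⟩
      · intro u hu v hv
        have hI's : ∀ y ∈ I', y ∈ s ∧ y ∉ T := by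
          intro y hy
          have := hI'sub hy
          rwa [hs', Finset.mem_sdiff] at this
        have hkey : ∀ y ∈ I', ¬ P.Adj w y ∧ ¬ R.Adj w y := by
          intro y hy
          obtain ⟨hys, hyT⟩ := hI's y hy
          refine ⟨hwun y hys, fun hadj => ?_⟩
          exact hyT (hAwT (by simp [hAw, hys, hadj]))
        by_cases huw : u = w <;> by_cases hvw : v = w
        · subst huw; subst hvw; exact ⟨P.loopless.irrefl _, R.loopless.irrefl _⟩
        · subst huw
          exact hkey v ((Finset.mem_insert.1 hv).resolve_left hvw)
        · subst hvw
          have := hkey u ((Finset.mem_insert.1 hu).resolve_left huw)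
          exact ⟨fun h => this.1 h.symm, fun h => this.2 h.symm⟩
        · exact hI'ind u ((Finset.mem_insert.1 hu).resolve_left huw) v
            ((Finset.mem_insert.1 hv).resolve_left hvw)
      · rw [Finset.card_insert_of_notMem hwI']
        have hTle : T.card ≤ s.card := Finset.card_le_card hTsub
        have : s.card = s'.card + T.card := by omega
        rw [this, Nat.mul_succ]
        omega


def cliqueOn (S : Finset V) : SimpleGraph V where
  Adj v w := v ≠ w ∧ v ∈ S ∧ w ∈ S
  symm := ⟨by intro v w ⟨h1, h2, h3⟩; exact ⟨h1.symm, h3, h2⟩⟩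
  loopless := ⟨by intro v ⟨h1, _⟩; exact h1 rfl⟩

lemma cliqueOn_adj (S : Finset V) (v w : V) :
    (cliqueOn S).Adj v w ↔ v ≠ w ∧ v ∈ S ∧ w ∈ S := Iff.rfl

lemma two_mul_choose_two (c : ℕ) : 2 * (c.choose 2) = c * (c - 1) := by
  rcases c with _ | c
  · simp
  · rw [Nat.choose_two_right]
    have heven : Even ((c+1) * c) := by
      simpa [Nat.mul_comm] using Nat.even_mul_succ_self c
    obtain ⟨m, hm⟩ := heven
    simp only [Nat.add_sub_cancel]
    omega

lemma card_edgeFinset_cliqueOn (S : Finset V) :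
    (cliqueOn S).edgeFinset.card = S.card.choose 2 := by
  have hdeg : ∀ v, (cliqueOn S).degree v = if v ∈ S then S.card - 1 else 0 := by
    intro v
    rw [← SimpleGraph.card_neighborFinset_eq_degree]
    by_cases hv : v ∈ S
    · have : (cliqueOn S).neighborFinset v = S.erase v := by
        ext w
        simp only [SimpleGraph.mem_neighborFinset, cliqueOn_adj, Finset.mem_erase]
        constructor
        · rintro ⟨h1, _, h3⟩; exact ⟨fun h => h1 h.symm, h3⟩
        · rintro ⟨h1, h2⟩; exact ⟨fun h => h1 h.symm, hv, h2⟩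
      rw [this, Finset.card_erase_of_mem hv, if_pos hv]
    · have : (cliqueOn S).neighborFinset v = ∅ := by
        rw [Finset.eq_empty_iff_forall_notMem]
        intro w hw
        rw [SimpleGraph.mem_neighborFinset, cliqueOn_adj] at hw
        exact hv hw.2.1
      rw [this, Finset.card_empty, if_neg hv]
  have hsum := SimpleGraph.sum_degrees_eq_twice_card_edges (cliqueOn S)
  have : ∑ v, (cliqueOn S).degree v = S.card * (S.card - 1) := by
    rw [Finset.sum_congr rfl (fun v _ => hdeg v)]
    rw [Finset.sum_ite_mem]
    simp only [Finset.univ_inter, Finset.sum_const, smul_eq_mul]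
  rw [this] at hsum
  have h2 := two_mul_choose_two S.card
  omega

def matchG (N : ℕ) : SimpleGraph (Fin N) where
  Adj v w := v ≠ w ∧ v.val / 2 = w.val / 2
  symm := ⟨by intro v w ⟨h1, h2⟩; exact ⟨h1.symm, h2.symm⟩⟩
  loopless := ⟨by intro v ⟨h1, _⟩; exact h1 rfl⟩

lemma matchG_adj {N : ℕ} (v w : Fin N) :
    (matchG N).Adj v w ↔ v ≠ w ∧ v.val / 2 = w.val / 2 := Iff.rfl

lemma matchG_deg_le {N : ℕ} (v : Fin N) :
    ((univ : Finset (Fin N)).filter ((matchG N).Adj v)).card ≤ 1 := by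
  rw [Finset.card_le_one]
  intro a ha b hb
  simp only [Finset.mem_filter, matchG_adj] at ha hb
  have h1 := Nat.div_add_mod a.val 2
  have h2 := Nat.div_add_mod b.val 2
  have h3 := Nat.div_add_mod v.val 2
  have ha2 : a.val % 2 < 2 := Nat.mod_lt _ (by omega)
  have hb2 : b.val % 2 < 2 := Nat.mod_lt _ (by omega)
  have hv2 : v.val % 2 < 2 := Nat.mod_lt _ (by omega)
  have hav : a.val ≠ v.val := fun h => ha.2.1 (Fin.ext h).symm
  have hbv : b.val ≠ v.val := fun h => hb.2.1 (Fin.ext h).symm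
  have : a.val = b.val := by omega
  exact Fin.ext this
lemma matchG_degree {N : ℕ} (hN : Odd N) (v : Fin N) :
    (matchG N).degree v = if v.val = N - 1 then 0 else 1 := by
  rw [← SimpleGraph.card_neighborFinset_eq_degree]
  by_cases hv : v.val = N - 1
  · rw [if_pos hv]
    rw [Finset.card_eq_zero]
    ext w
    simp only [SimpleGraph.mem_neighborFinset, matchG_adj, Finset.notMem_empty, iff_false]
    rintro ⟨h1, h2⟩
    rcases hN with ⟨m, hm⟩
    have hw := w.isLt
    have hvv := v.isLt
    have h3 := Nat.div_add_mod w.val 2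
    have h4 := Nat.div_add_mod v.val 2
    have h5 : w.val % 2 < 2 := Nat.mod_lt _ (by omega)
    have h6 : v.val % 2 < 2 := Nat.mod_lt _ (by omega)
    have : w.val = v.val := by omega
    exact h1 (Fin.ext this).symm
  · rw [if_neg hv]
    have hvlt := v.isLt
    -- partner
    set p : ℕ := if v.val % 2 = 0 then v.val + 1 else v.val - 1 with hp
    have hple : p < N := by
      have h6 : v.val % 2 < 2 := Nat.mod_lt _ (by omega)
      rcases hN with ⟨m, hm⟩
      rw [hp]
      split_ifs with h
      · omega
      · omega
    have hpadj : (matchG N).Adj v ⟨p, hple⟩ := by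
      rw [matchG_adj]
      have h4 := Nat.div_add_mod v.val 2
      have h6 : v.val % 2 < 2 := Nat.mod_lt _ (by omega)
      constructor
      · intro h
        have := congrArg Fin.val h
        simp only [hp] at this
        by_cases hh : v.val % 2 = 0 <;> simp [hh] at this <;> omega
      · simp only [hp]
        by_cases hh : v.val % 2 = 0 <;> simp [hh] <;> omega
    have : (matchG N).neighborFinset v = {⟨p, hple⟩} := by
      ext w
      simp only [SimpleGraph.mem_neighborFinset, Finset.mem_singleton]
      constructor
      · intro hw
        have h1 := matchG_deg_le v
        rw [Finset.card_le_one] at h1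
        exact h1 w (by simp [hw]) ⟨p, hple⟩ (by simp [hpadj])
      · rintro rfl; exact hpadj
    rw [this, Finset.card_singleton]

lemma card_edgeFinset_matchG {N : ℕ} (hN : Odd N) :
    (matchG N).edgeFinset.card = (N - 1) / 2 := by
  have hsum := SimpleGraph.sum_degrees_eq_twice_card_edges (matchG N)
  have hNpos : 0 < N := by rcases hN with ⟨m, hm⟩; omega
  have : ∑ v : Fin N, (matchG N).degree v = N - 1 := by
    rw [Finset.sum_congr rfl (fun v _ => matchG_degree hN v)]
    rw [Finset.sum_ite, Finset.sum_const, Finset.sum_const]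
    simp only [smul_eq_mul, mul_zero, mul_one, zero_add]
    have hfil : ((univ : Finset (Fin N)).filter (fun v : Fin N => v.val = N - 1))
        = {⟨N-1, by omega⟩} := by
      ext v
      simp only [Finset.mem_filter, Finset.mem_univ, true_and, Finset.mem_singleton]
      constructor
      · intro h; exact Fin.ext h
      · rintro rfl; rfl
    have hsplit := Finset.card_filter_add_card_filter_not
      (s := (univ : Finset (Fin N))) (p := fun v : Fin N => v.val = N - 1)
    rw [hfil] at hsplit
    rw [Finset.card_univ, Fintype.card_fin, Finset.card_singleton] at hsplit
    omega
  rw [this] at hsum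
  rcases hN with ⟨m, hm⟩
  omega

lemma card_edgeFinset_add_compl (H : SimpleGraph V) :
    H.edgeFinset.card + Hᶜ.edgeFinset.card = (Fintype.card V).choose 2 := by
  have hsup : H ⊔ Hᶜ = ⊤ := sup_compl_eq_top
  have hdisj : Disjoint H Hᶜ := disjoint_compl_right
  have h1 : (H ⊔ Hᶜ).edgeFinset = H.edgeFinset ∪ Hᶜ.edgeFinset := SimpleGraph.edgeFinset_sup
  have h2 : Disjoint H.edgeFinset Hᶜ.edgeFinset := by
    rw [Finset.disjoint_left]
    intro e he1 he2
    rw [SimpleGraph.mem_edgeFinset] at he1 he2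
    have := SimpleGraph.disjoint_edgeSet.2 hdisj
    exact Set.disjoint_left.1 this he1 he2
  have htop := SimpleGraph.card_edgeFinset_top_eq_card_choose_two (V := V)
  have h3 : H.edgeFinset ∪ Hᶜ.edgeFinset = (⊤ : SimpleGraph V).edgeFinset := by
    ext e
    simp only [Finset.mem_union, SimpleGraph.mem_edgeFinset]
    rw [← Set.mem_union, ← SimpleGraph.edgeSet_sup, hsup]
  rw [← htop, ← h3, Finset.card_union_of_disjoint h2]

lemma top_sdiff_eq_compl (H : SimpleGraph V) : (⊤ : SimpleGraph V) \ H = Hᶜ := by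
  ext v w
  simp [SimpleGraph.sdiff_adj, SimpleGraph.compl_adj]
lemma card_filter_le_of_all_mem {α : Type*} [Fintype α] {p : α → Prop} {hp : DecidablePred p}
    (t : Finset α) (h : ∀ a, p a → a ∈ t) :
    (@Finset.filter α p hp univ).card ≤ t.card :=
  Finset.card_le_card (fun a ha => h a (Finset.mem_filter.1 ha).2)

/-- Defeating colouring from a partition. -/
lemma not_arrows_of_partition {m k n : ℕ} (hn : 2 ≤ n) (hk : 1 ≤ k)
    (F : SimpleGraph (Fin m)) (π : Fin m → Fin (n-1))
    (h : ∀ v, ((univ : Finset (Fin m)).filter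
      (fun w => F.Adj v w ∧ π v = π w)).card ≤ k - 1) :
    ¬ Arrows F (_root_.starGraph k) (⊤ : SimpleGraph (Fin n)) := by
  intro harr
  set R : SimpleGraph (Fin m) :=
    { Adj := fun v w => F.Adj v w ∧ π v = π w
      symm := ⟨fun v w h => ⟨h.1.symm, h.2.symm⟩⟩
      loopless := ⟨fun v h => F.loopless.irrefl v h.1⟩ } with hR
  have hle : R ≤ F := fun v w h => h.1
  rcases harr R hle with hred | hblue
  · obtain ⟨v, t, htc, hadjt⟩ := degree_of_copy_star hred
    have hsub : t ⊆ (univ : Finset (Fin m)).filter (fun w => F.Adj v w ∧ π v = π w) := by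
      intro w hw
      exact Finset.mem_filter.2 ⟨Finset.mem_univ _, hadjt w hw⟩
    have := Finset.card_le_card hsub
    have := h v
    omega
  · obtain ⟨g, hg⟩ := hblue
    have hcard : Fintype.card (Fin (n-1)) < Fintype.card (Fin n) := by
      simp only [Fintype.card_fin]; omega
    obtain ⟨i, j, hij, heq⟩ :=
      Fintype.exists_ne_map_eq_of_card_lt (fun i : Fin n => π (g i)) hcard
    have hadj := g.map_adj (by rw [top_adj]; exact hij)
    rw [SimpleGraph.sdiff_adj] at hadj
    exact hadj.2 ⟨hadj.1, heq⟩

lemma fiber_card_le {m k : ℕ} (hk : 1 ≤ k) (c : ℕ) :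
    ((univ : Finset (Fin m)).filter (fun w : Fin m => w.val / k = c)).card ≤ k := by
  have := Finset.card_le_card_of_injOn
    (f := fun w : Fin m => (⟨w.val % k, Nat.mod_lt _ (by omega)⟩ : Fin k))
    (s := (univ : Finset (Fin m)).filter (fun w : Fin m => w.val / k = c))
    (t := (univ : Finset (Fin k)))
    (fun w _ => Finset.mem_univ _) ?_
  · simpa using this
  · intro a ha b hb hab
    simp only [Finset.coe_filter, Set.mem_setOf_eq] at ha hb
    have h1 : a.val % k = b.val % k := congrArg Fin.val hab
    have h2 := Nat.div_add_mod a.val k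
    have h3 := Nat.div_add_mod b.val k
    have h4 : k * (a.val / k) = k * c := by rw [ha.2]
    have h5 : k * (b.val / k) = k * c := by rw [hb.2]
    exact Fin.ext (by omega)

lemma not_arrows_small {m k n : ℕ} (hk : 2 ≤ k) (hn : 2 ≤ n) (hm : m ≤ k * (n-1)) :
    ¬ Arrows (⊤ : SimpleGraph (Fin m)) (_root_.starGraph k) (⊤ : SimpleGraph (Fin n)) := by
  have hb : ∀ v : Fin m, v.val / k < n - 1 := by
    intro v
    have h1 : v.val < k * (n-1) := lt_of_lt_of_le v.isLt hm
    exact Nat.div_lt_of_lt_mul h1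
  apply not_arrows_of_partition hn (by omega) _ (fun v => ⟨v.val / k, hb v⟩)
  intro v
  have hvfib : v ∈ (univ : Finset (Fin m)).filter (fun w : Fin m => w.val / k = v.val / k) := by
    simp
  have hfib := fiber_card_le (m := m) (k := k) (by omega) (v.val / k)
  refine le_trans (card_filter_le_of_all_mem
    (((univ : Finset (Fin m)).filter (fun w : Fin m => w.val / k = v.val / k)).erase v) ?_)
    (le_trans (le_of_eq (Finset.card_erase_of_mem hvfib)) (by omega))
  intro w hw
  have hne : v ≠ w := hw.1
  have heq : w.val / k = v.val / k := (congrArg Fin.val hw.2).symm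
  exact Finset.mem_erase.2 ⟨fun hh => hne hh.symm,
    Finset.mem_filter.2 ⟨Finset.mem_univ _, heq⟩⟩

lemma arrows_top {k n N : ℕ} (hk : 2 ≤ k) (hn : 2 ≤ n) (hN : N = k*(n-1)+1) :
    Arrows (⊤ : SimpleGraph (Fin N)) (_root_.starGraph k) (⊤ : SimpleGraph (Fin n)) := by
  intro R hle
  by_cases hdeg : ∃ v, k ≤ ((univ : Finset (Fin N)).filter (R.Adj v)).card
  · obtain ⟨v, hv⟩ := hdeg
    exact Or.inl (copy_star_of_degree v _ hv (fun w hw => (Finset.mem_filter.1 hw).2))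
  · push_neg at hdeg
    obtain ⟨I, hIc, hIind⟩ := key_indep hk hn hN ∅ (by simp) R
      (fun v => by have := hdeg v; omega)
    refine Or.inr (copy_clique_of_finset I (le_of_eq hIc.symm) ?_)
    intro u hu w hw huw
    rw [SimpleGraph.sdiff_adj, top_adj]
    exact ⟨huw, (hIind u hu w hw huw).1⟩

lemma ramsey_eq {k n : ℕ} (hk : 2 ≤ k) (hn : 2 ≤ n) :
    ramseyNumber (_root_.starGraph k) (⊤ : SimpleGraph (Fin n)) = k*(n-1)+1 := by
  set S : Set ℕ :=
    {N | Arrows (⊤ : SimpleGraph (Fin N)) (_root_.starGraph k) (⊤ : SimpleGraph (Fin n))} with hS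
  have hram : ramseyNumber (_root_.starGraph k) (⊤ : SimpleGraph (Fin n)) = sInf S := rfl
  have hmem : (k*(n-1)+1) ∈ S := arrows_top hk hn rfl
  have hle : sInf S ≤ k*(n-1)+1 := Nat.sInf_le hmem
  rcases Nat.lt_or_ge (sInf S) (k*(n-1)+1) with hlt | hge
  · exfalso
    have hmem' : sInf S ∈ S := Nat.sInf_mem ⟨_, hmem⟩
    exact not_arrows_small hk hn (by omega) hmem'
  · omega
lemma arrows_compl_clique {k n N : ℕ} (hk : 2 ≤ k) (hn : 2 ≤ n) (hN : N = k*(n-1)+1)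
    (S : Finset (Fin N)) (hS : S.card = k) :
    Arrows ((cliqueOn S)ᶜ) (_root_.starGraph k) (⊤ : SimpleGraph (Fin n)) := by
  intro R hle
  by_cases hdeg : ∃ v, k ≤ ((univ : Finset (Fin N)).filter (R.Adj v)).card
  · obtain ⟨v, hv⟩ := hdeg
    exact Or.inl (copy_star_of_degree v _ hv (fun w hw => (Finset.mem_filter.1 hw).2))
  · push_neg at hdeg
    obtain ⟨I, hIc, hIind⟩ := key_indep hk hn hN S (le_of_eq hS) R
      (fun v => by have := hdeg v; omega)
    refine Or.inr (copy_clique_of_finset I (le_of_eq hIc.symm) ?_)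
    intro u hu w hw huw
    obtain ⟨hR, hSS⟩ := hIind u hu w hw huw
    rw [SimpleGraph.sdiff_adj, SimpleGraph.compl_adj]
    exact ⟨⟨huw, fun hadj => hSS ⟨hadj.2.1, hadj.2.2⟩⟩, hR⟩

lemma arrows_compl_match {k n N : ℕ} (hk : 2 ≤ k) (hn : 2 ≤ n) (hke : Even k)
    (hN : N = k*(n-1)+1) :
    Arrows ((matchG N)ᶜ) (_root_.starGraph k) (⊤ : SimpleGraph (Fin n)) := by
  intro R hle
  by_cases hdeg : ∃ v, k ≤ ((univ : Finset (Fin N)).filter (R.Adj v)).card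
  · obtain ⟨v, hv⟩ := hdeg
    exact Or.inl (copy_star_of_degree v _ hv (fun w hw => (Finset.mem_filter.1 hw).2))
  · push_neg at hdeg
    have hRdeg : ∀ v, ((univ : Finset (Fin N)).filter (R.Adj v)).card ≤ k - 1 :=
      fun v => by have := hdeg v; omega
    have hodd : Odd ((univ : Finset (Fin N)).card) := by
      rw [Finset.card_univ, Fintype.card_fin, hN]
      rcases hke with ⟨m, hm⟩
      exact ⟨m*(n-1), by subst hm; ring⟩
    obtain ⟨I, hIsub, hIind, hIcard⟩ :=
      matching_indep hk hke (matchG N) R matchG_deg_le hRdeg univ hodd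
    have hIn : n ≤ I.card := by
      have hu : (univ : Finset (Fin N)).card = N := by simp
      by_contra hcon
      push_neg at hcon
      have : k * I.card ≤ k * (n-1) := Nat.mul_le_mul_left k (by omega)
      omega
    refine Or.inr (copy_clique_of_finset I hIn ?_)
    intro u hu w hw huw
    obtain ⟨hP, hR⟩ := hIind u hu w hw
    rw [SimpleGraph.sdiff_adj, SimpleGraph.compl_adj]
    exact ⟨⟨huw, hP⟩, hR⟩
lemma starProp_of_arrows {k n N : ℕ} (hk : 2 ≤ k) (hn : 2 ≤ n) (hN : N = k*(n-1)+1)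
    (F : SimpleGraph (Fin N)) (harr : Arrows F (_root_.starGraph k) (⊤ : SimpleGraph (Fin n)))
    (T : Finset (Fin N)) (hT : T.card = k + 1)
    (hTcov : ∀ v ∈ T, ∃ u ∈ T, v ≠ u ∧ ¬ F.Adj v u) : False := by
  set c : Finset (Fin N) := univ \ T with hc
  have hcT : ∀ w : Fin N, w ∉ c ↔ w ∈ T := by
    intro w
    rw [hc, Finset.mem_sdiff]
    simp
  have hccard : c.card = k*(n-2) := by
    rw [hc, Finset.card_sdiff_of_subset (Finset.subset_univ T), Finset.card_univ, Fintype.card_fin, hT]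
    have h3 : k * (n-1) = k*(n-2) + k := by
      have h4 : n - 1 = (n-2)+1 := by omega
      rw [h4, Nat.mul_succ]
    omega
  have hkpos : 0 < k := by omega
  set e : (c : Finset (Fin N)) ≃ Fin c.card := c.equivFin with he
  have hbnd : ∀ (w : Fin N) (hw : w ∈ c), (e ⟨w, hw⟩).val / k + 1 < n - 1 := by
    intro w hw
    have h1 : (e ⟨w, hw⟩).val < c.card := (e ⟨w, hw⟩).isLt
    have h2 : (e ⟨w, hw⟩).val < k * (n-2) := by omega
    have h3 : (e ⟨w, hw⟩).val / k < n - 2 := Nat.div_lt_of_lt_mul h2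
    omega
  set π : Fin N → Fin (n-1) := fun v =>
    if h : v ∈ c then ⟨(e ⟨v, h⟩).val / k + 1, hbnd v h⟩
    else ⟨0, by omega⟩ with hπ
  have hπc : ∀ (w : Fin N) (hw : w ∈ c), π w = ⟨(e ⟨w, hw⟩).val / k + 1, hbnd w hw⟩ :=
    fun w hw => dif_pos hw
  have hπT : ∀ (w : Fin N), w ∉ c → π w = ⟨0, by omega⟩ :=
    fun w hw => dif_neg hw
  refine not_arrows_of_partition hn (by omega) F π ?_ harr
  intro v
  by_cases hv : v ∈ c
  · -- v outside T : bound by the fibre of size ≤ k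
    have hvfib : v ∈ c.filter (fun w => ∃ hw : w ∈ c,
        (e ⟨w, hw⟩).val / k = (e ⟨v, hv⟩).val / k) :=
      Finset.mem_filter.2 ⟨hv, hv, rfl⟩
    refine le_trans (card_filter_le_of_all_mem
      ((c.filter (fun w => ∃ hw : w ∈ c,
        (e ⟨w, hw⟩).val / k = (e ⟨v, hv⟩).val / k)).erase v) ?_)
      (le_trans (le_of_eq (Finset.card_erase_of_mem hvfib)) ?_)
    · rintro w ⟨hadj, heq⟩
      have hwc : w ∈ c := by
        by_contra hwc
        rw [hπc v hv, hπT w hwc] at heq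
        have := congrArg Fin.val heq
        simp at this
      refine Finset.mem_erase.2 ⟨hadj.ne.symm, Finset.mem_filter.2 ⟨hwc, hwc, ?_⟩⟩
      rw [hπc v hv, hπc w hwc] at heq
      have h9 := congrArg Fin.val heq
      simp only at h9
      omega
    · -- fibre has at most k elements
      have hfib : (c.filter (fun w => ∃ hw : w ∈ c,
          (e ⟨w, hw⟩).val / k = (e ⟨v, hv⟩).val / k)).card ≤ k := by
        have := Finset.card_le_card_of_injOn
          (f := fun w : Fin N => if hw : w ∈ c then
              (⟨(e ⟨w, hw⟩).val % k, Nat.mod_lt _ hkpos⟩ : Fin k) else ⟨0, hkpos⟩)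
          (s := c.filter (fun w => ∃ hw : w ∈ c,
            (e ⟨w, hw⟩).val / k = (e ⟨v, hv⟩).val / k))
          (t := (univ : Finset (Fin k)))
          (fun w _ => Finset.mem_univ _) ?_
        · simpa using this
        · intro a ha b hb hab
          simp only [Finset.coe_filter, Set.mem_setOf_eq] at ha hb
          obtain ⟨hac, hae, haeq⟩ := ha
          obtain ⟨hbc, hbe, hbeq⟩ := hb
          simp only at hab
          rw [dif_pos hac, dif_pos hbc] at hab
          have h1 : (e ⟨a, hac⟩).val % k = (e ⟨b, hbc⟩).val % k := congrArg Fin.val hab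
          have h2 := Nat.div_add_mod (e ⟨a, hac⟩).val k
          have h3 := Nat.div_add_mod (e ⟨b, hbc⟩).val k
          have h4 : k * ((e ⟨a, hac⟩).val / k) = k * ((e ⟨v, hv⟩).val / k) := by
            have h44 : (e ⟨a, hac⟩).val / k = (e ⟨v, hv⟩).val / k := by
              have : (⟨a, hac⟩ : {x // x ∈ c}) = ⟨a, hae⟩ := rfl
              rw [this]; exact haeq
            rw [h44]
          have h5 : k * ((e ⟨b, hbc⟩).val / k) = k * ((e ⟨v, hv⟩).val / k) := by
            have h55 : (e ⟨b, hbc⟩).val / k = (e ⟨v, hv⟩).val / k := by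
              have : (⟨b, hbc⟩ : {x // x ∈ c}) = ⟨b, hbe⟩ := rfl
              rw [this]; exact hbeq
            rw [h55]
          have h6 : (e ⟨a, hac⟩).val = (e ⟨b, hbc⟩).val := by omega
          have h7 : (⟨a, hac⟩ : {x // x ∈ c}) = ⟨b, hbc⟩ := e.injective (Fin.ext h6)
          exact congrArg Subtype.val h7
      omega
  · -- v ∈ T : has a non-F-neighbour in T
    have hvT : v ∈ T := (hcT v).1 hv
    obtain ⟨u, huT, hvu, hnadj⟩ := hTcov v hvT
    have huvT : u ∈ T.erase v := Finset.mem_erase.2 ⟨hvu.symm, huT⟩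
    refine le_trans (card_filter_le_of_all_mem ((T.erase v).erase u) ?_) ?_
    · rintro w ⟨hadj, heq⟩
      have hwT : w ∈ T := by
        rw [← hcT]
        intro hwc
        rw [hπT v hv, hπc w hwc] at heq
        have := congrArg Fin.val heq
        simp at this
      refine Finset.mem_erase.2 ⟨?_, Finset.mem_erase.2 ⟨hadj.ne.symm, hwT⟩⟩
      intro hwu
      subst hwu
      exact hnadj hadj
    · rw [Finset.card_erase_of_mem huvT, Finset.card_erase_of_mem hvT, hT]
      omega
lemma sym2_exists_rep {α : Type*} (e : Sym2 α) : ∃ a b, e = Sym2.mk a b := by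
  induction e using Sym2.ind with
  | _ x y => exact ⟨x, y, rfl⟩

noncomputable def supp {N : ℕ} (A : Finset (Sym2 (Fin N))) : Finset (Fin N) :=
  (univ : Finset (Fin N)).filter (fun v => ∃ e ∈ A, v ∈ e)

lemma mem_supp {N : ℕ} {A : Finset (Sym2 (Fin N))} {v : Fin N} :
    v ∈ supp A ↔ ∃ e ∈ A, v ∈ e := by
  rw [supp, Finset.mem_filter]
  simp

lemma supp_mono {N : ℕ} {A B : Finset (Sym2 (Fin N))} (h : A ⊆ B) : supp A ⊆ supp B := by
  intro v hv
  rw [mem_supp] at hv ⊢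
  obtain ⟨e, he, hve⟩ := hv
  exact ⟨e, h he, hve⟩

lemma supp_card_of_pairwise {N : ℕ} (C₀ A : Finset (Sym2 (Fin N)))
    (hsub : C₀ ⊆ A) (hdiag : ∀ e ∈ A, ¬ e.IsDiag)
    (H : ∀ e ∈ A, e ∉ C₀ → ∀ x, x ∈ e → x ∉ supp (A.erase e)) :
    (supp A).card = (supp C₀).card + 2 * (A \ C₀).card := by
  have aux : ∀ B : Finset (Sym2 (Fin N)), B ⊆ A → C₀ ⊆ B →
      (supp B).card = (supp C₀).card + 2 * (B \ C₀).card := by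
    intro B
    induction B using Finset.strongInductionOn with
    | _ B ih =>
      intro hBA hCB
      by_cases hBC : B ⊆ C₀
      · have hEq : B = C₀ := Finset.Subset.antisymm hBC hCB
        rw [hEq]
        simp
      · obtain ⟨e, heB, heC⟩ := Finset.not_subset.1 hBC
        set B' := B.erase e with hB'
        have hB'ss : B' ⊂ B := Finset.erase_ssubset heB
        have hB'A : B' ⊆ A := le_trans (Finset.erase_subset _ _) hBA
        have hCB' : C₀ ⊆ B' := fun x hx =>
          Finset.mem_erase.2 ⟨fun hxe => heC (hxe ▸ hx), hCB hx⟩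
        have ihB' := ih B' hB'ss hB'A hCB'
        obtain ⟨x, y, rfl⟩ := sym2_exists_rep e
        have hxy : x ≠ y := by
          have := hdiag _ (hBA heB)
          rwa [Sym2.mk_isDiag_iff] at this
        have hB'sub : B' ⊆ A.erase (Sym2.mk x y) :=
          Finset.erase_subset_erase _ hBA
        have hxnot : x ∉ supp B' := fun hmem =>
          H _ (hBA heB) heC x (by rw [Sym2.mem_iff]; left; rfl) (supp_mono hB'sub hmem)
        have hynot : y ∉ supp B' := fun hmem =>
          H _ (hBA heB) heC y (by rw [Sym2.mem_iff]; right; rfl) (supp_mono hB'sub hmem)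
        have hsupp : supp B = insert x (insert y (supp B')) := by
          ext v
          rw [mem_supp, Finset.mem_insert, Finset.mem_insert, mem_supp]
          constructor
          · rintro ⟨f, hfB, hvf⟩
            by_cases hfe : f = Sym2.mk x y
            · subst hfe
              rcases Sym2.mem_iff.1 hvf with rfl | rfl
              · exact Or.inl rfl
              · exact Or.inr (Or.inl rfl)
            · exact Or.inr (Or.inr ⟨f, Finset.mem_erase.2 ⟨hfe, hfB⟩, hvf⟩)
          · rintro (h | h | ⟨f, hfB', hvf⟩)
            · exact ⟨Sym2.mk x y, heB, by rw [h, Sym2.mem_iff]; left; rfl⟩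
            · exact ⟨Sym2.mk x y, heB, by rw [h, Sym2.mem_iff]; right; rfl⟩
            · exact ⟨f, (Finset.mem_erase.1 hfB').2, hvf⟩
        have hcard : (supp B).card = (supp B').card + 2 := by
          rw [hsupp, Finset.card_insert_of_notMem (by
            rw [Finset.mem_insert]
            rintro (rfl | hmem)
            · exact hxy rfl
            · exact hxnot hmem), Finset.card_insert_of_notMem hynot]
        have hsd : B' \ C₀ = (B \ C₀).erase (Sym2.mk x y) := by
          ext f
          rw [Finset.mem_sdiff, hB', Finset.mem_erase, Finset.mem_erase, Finset.mem_sdiff]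
          tauto
        have hmemsd : Sym2.mk x y ∈ B \ C₀ := Finset.mem_sdiff.2 ⟨heB, heC⟩
        have hc2 : (B' \ C₀).card = (B \ C₀).card - 1 := by
          rw [hsd, Finset.card_erase_of_mem hmemsd]
        have hge1 : 1 ≤ (B \ C₀).card := Finset.card_pos.2 ⟨_, hmemsd⟩
        omega
  exact aux A (le_refl A) hsub

lemma supp_all_le {k N : ℕ} (hk : 2 ≤ k) (G' : SimpleGraph (Fin N))
    (hstar : ∀ T : Finset (Fin N), T.card = k+1 → ∃ v ∈ T, ∀ u ∈ T, ¬ G'.Adj v u)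
    (C₀ : Finset (Sym2 (Fin N))) (hC₀E : C₀ ⊆ G'.edgeFinset)
    (hpar : (k + (supp C₀).card) % 2 = 1) (hsmall : (supp C₀).card < k + 2) :
    (supp G'.edgeFinset).card ≤ k := by
  by_contra hbig
  push_neg at hbig
  set 𝒞 := (G'.edgeFinset.powerset).filter
    (fun A => C₀ ⊆ A ∧ k+1 ≤ (supp A).card) with h𝒞
  have hne : 𝒞.Nonempty := ⟨G'.edgeFinset, by
    rw [h𝒞, Finset.mem_filter, Finset.mem_powerset]
    exact ⟨le_refl _, hC₀E, hbig⟩⟩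
  obtain ⟨A, hA𝒞, hmin⟩ := Finset.exists_min_image 𝒞 Finset.card hne
  rw [h𝒞, Finset.mem_filter, Finset.mem_powerset] at hA𝒞
  obtain ⟨hAE, hCA, hAsupp⟩ := hA𝒞
  have hdiag : ∀ e ∈ A, ¬ e.IsDiag := fun e he =>
    SimpleGraph.not_isDiag_of_mem_edgeSet G' (SimpleGraph.mem_edgeFinset.1 (hAE he))
  -- helper : an endpoint of an edge in A gives an adjacency inside supp A
  have hadj_of_mem : ∀ e ∈ A, ∀ v, v ∈ e → ∃ u, u ∈ e ∧ G'.Adj v u := by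
    intro e heA v hve
    obtain ⟨x, y, rfl⟩ := sym2_exists_rep e
    have hadj : G'.Adj x y := by
      have := SimpleGraph.mem_edgeFinset.1 (hAE heA)
      rwa [SimpleGraph.mem_edgeSet] at this
    rcases Sym2.mem_iff.1 hve with rfl | rfl
    · exact ⟨y, by rw [Sym2.mem_iff]; right; rfl, hadj⟩
    · exact ⟨x, by rw [Sym2.mem_iff]; left; rfl, hadj.symm⟩
  rcases eq_or_lt_of_le hAsupp with heq | hgt
  · -- supp A has exactly k+1 elements : contradicts the star property
    obtain ⟨v, hv, hnadj⟩ := hstar (supp A) heq.symm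
    obtain ⟨e, heA, hve⟩ := mem_supp.1 hv
    obtain ⟨u, hue, hadj⟩ := hadj_of_mem e heA v hve
    exact hnadj u (mem_supp.2 ⟨e, heA, hue⟩) hadj
  · -- supp A ≥ k+2
    have hexe : ∃ e ∈ A, e ∉ C₀ := by
      by_contra hcon
      push_neg at hcon
      have hEq2 : A = C₀ := Finset.Subset.antisymm hcon hCA
      rw [hEq2] at hgt
      omega
    have hmin' : ∀ e ∈ A, e ∉ C₀ → ¬ (k+1 ≤ (supp (A.erase e)).card) := by
      intro e heA heC hcon
      have hmem : A.erase e ∈ 𝒞 := by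
        rw [h𝒞, Finset.mem_filter, Finset.mem_powerset]
        exact ⟨le_trans (Finset.erase_subset _ _) hAE,
          fun x hx => Finset.mem_erase.2 ⟨fun hxe => heC (hxe ▸ hx), hCA hx⟩, hcon⟩
      have h1 := hmin _ hmem
      rw [Finset.card_erase_of_mem heA] at h1
      have h2 : 1 ≤ A.card := Finset.card_pos.2 ⟨e, heA⟩
      omega
    have H : ∀ e ∈ A, e ∉ C₀ → ∀ x, x ∈ e → x ∉ supp (A.erase e) := by
      intro e heA heC x hxe hxsupp
      -- then supp A ⊆ insert (other endpoint) (supp (A.erase e)), contradicting sizes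
      obtain ⟨a, b, rfl⟩ := sym2_exists_rep e
      apply hmin' _ heA heC
      -- supp A ⊆ insert a (insert b (supp (A.erase _)))... but we know x is already in;
      have hsub2 : supp A ⊆ insert a (insert b (supp (A.erase (Sym2.mk a b)))) := by
        intro v hv
        obtain ⟨f, hfA, hvf⟩ := mem_supp.1 hv
        by_cases hfe : f = Sym2.mk a b
        · subst hfe
          rcases Sym2.mem_iff.1 hvf with rfl | rfl
          · exact Finset.mem_insert_self _ _
          · exact Finset.mem_insert_of_mem (Finset.mem_insert_self _ _)
        · exact Finset.mem_insert_of_mem (Finset.mem_insert_of_mem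
            (mem_supp.2 ⟨f, Finset.mem_erase.2 ⟨hfe, hfA⟩, hvf⟩))
      -- x ∈ {a, b} and x ∈ supp would-be; use cardinalities
      have hcard2 : (supp A).card ≤ (supp (A.erase (Sym2.mk a b))).card + 2 := by
        calc (supp A).card ≤ _ := Finset.card_le_card hsub2
          _ ≤ _ + 1 := Finset.card_insert_le _ _
          _ ≤ ((supp (A.erase (Sym2.mk a b))).card + 1) + 1 :=
              Nat.add_le_add_right (Finset.card_insert_le _ _) 1
          _ = _ := by omega
      -- sharpen : since x ∈ supp (A.erase e) with x ∈ {a,b}, one insert is absorbed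
      rcases Sym2.mem_iff.1 hxe with rfl | rfl
      · -- x = a
        have hsub3 : supp A ⊆ insert b (supp (A.erase (Sym2.mk x b))) := by
          intro v hv
          rcases Finset.mem_insert.1 (hsub2 hv) with rfl | hv2
          · exact Finset.mem_insert_of_mem hxsupp
          · exact hv2
        have := Finset.card_le_card hsub3
        have h4 := Finset.card_insert_le b (supp (A.erase (Sym2.mk x b)))
        omega
      · -- x = b
        have hsub3 : supp A ⊆ insert a (supp (A.erase (Sym2.mk a x))) := by
          intro v hv
          rcases Finset.mem_insert.1 (hsub2 hv) with rfl | hv2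
          · exact Finset.mem_insert_self _ _
          · rcases Finset.mem_insert.1 hv2 with rfl | hv3
            · exact Finset.mem_insert_of_mem hxsupp
            · exact Finset.mem_insert_of_mem hv3
        have := Finset.card_le_card hsub3
        have h4 := Finset.card_insert_le a (supp (A.erase (Sym2.mk a x)))
        omega
    -- parity count
    have hparity := supp_card_of_pairwise C₀ A hCA hdiag H
    -- also supp A ≤ k + 2
    obtain ⟨e, heA, heC⟩ := hexe
    have hle2 : (supp A).card ≤ k + 2 := by
      obtain ⟨a, b, rfl⟩ := sym2_exists_rep e
      have hsub2 : supp A ⊆ insert a (insert b (supp (A.erase (Sym2.mk a b)))) := by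
        intro v hv
        obtain ⟨f, hfA, hvf⟩ := mem_supp.1 hv
        by_cases hfe : f = Sym2.mk a b
        · subst hfe
          rcases Sym2.mem_iff.1 hvf with rfl | rfl
          · exact Finset.mem_insert_self _ _
          · exact Finset.mem_insert_of_mem (Finset.mem_insert_self _ _)
        · exact Finset.mem_insert_of_mem (Finset.mem_insert_of_mem
            (mem_supp.2 ⟨f, Finset.mem_erase.2 ⟨hfe, hfA⟩, hvf⟩))
      have h1 := Finset.card_le_card hsub2
      have h2 := Finset.card_insert_le a (insert b (supp (A.erase (Sym2.mk a b))))
      have h3 := Finset.card_insert_le b (supp (A.erase (Sym2.mk a b)))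
      have h5 := hmin' _ heA heC
      omega
    omega
lemma supp_empty {N : ℕ} : supp (∅ : Finset (Sym2 (Fin N))) = ∅ := by
  rw [Finset.eq_empty_iff_forall_notMem]
  intro v hv
  obtain ⟨e, he, _⟩ := mem_supp.1 hv
  exact absurd he (Finset.notMem_empty e)

set_option maxHeartbeats 1000000 in
lemma edge_bound_aux {k n N : ℕ} (hk : 2 ≤ k) (hn : 2 ≤ n) (hN : N = k*(n-1)+1)
    (G' : SimpleGraph (Fin N))
    (hstar : ∀ T : Finset (Fin N), T.card = k+1 → ∃ v ∈ T, ∀ u ∈ T, ¬ G'.Adj v u) :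
    G'.edgeSet.ncard ≤ (if n ≤ k ∨ Odd k then k.choose 2 else k*(n-1)/2) := by
  rw [← SimpleGraph.coe_edgeFinset, Set.ncard_coe_finset]
  have hmain : (supp G'.edgeFinset).card ≤ k ∨
      (¬ Odd k ∧ ∀ v, ((univ : Finset (Fin N)).filter (G'.Adj v)).card ≤ 1) := by
    by_cases hko : Odd k
    · left
      refine supp_all_le hk G' hstar ∅ (Finset.empty_subset _) ?_ ?_
      · rw [supp_empty]
        simp only [Finset.card_empty, Nat.add_zero]
        rwa [← Nat.odd_iff]
      · rw [supp_empty]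
        simp only [Finset.card_empty]
        omega
    · by_cases hd2 : ∃ v a b, a ≠ b ∧ G'.Adj v a ∧ G'.Adj v b
      · left
        obtain ⟨v, a, b, hab, ha, hb⟩ := hd2
        have hva : v ≠ a := ha.ne
        have hvb : v ≠ b := hb.ne
        set C₀ : Finset (Sym2 (Fin N)) := {Sym2.mk v a, Sym2.mk v b} with hC₀
        have hC₀E : C₀ ⊆ G'.edgeFinset := by
          intro e he
          rcases Finset.mem_insert.1 he with rfl | he
          · exact SimpleGraph.mem_edgeFinset.2 ((SimpleGraph.mem_edgeSet G').2 ha)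
          · rw [Finset.mem_singleton.1 he]
            exact SimpleGraph.mem_edgeFinset.2 ((SimpleGraph.mem_edgeSet G').2 hb)
        have hsuppC : supp C₀ = {v, a, b} := by
          ext w
          rw [mem_supp]
          constructor
          · rintro ⟨e, he, hwe⟩
            rcases Finset.mem_insert.1 he with rfl | he
            · rcases Sym2.mem_iff.1 hwe with rfl | rfl
              · exact Finset.mem_insert_self _ _
              · exact Finset.mem_insert_of_mem (Finset.mem_insert_self _ _)
            · rw [Finset.mem_singleton.1 he] at hwe
              rcases Sym2.mem_iff.1 hwe with rfl | rfl
              · exact Finset.mem_insert_self _ _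
              · exact Finset.mem_insert_of_mem
                  (Finset.mem_insert_of_mem (Finset.mem_singleton_self _))
          · intro hw
            rcases Finset.mem_insert.1 hw with rfl | hw
            · exact ⟨Sym2.mk w a, Finset.mem_insert_self _ _,
                by rw [Sym2.mem_iff]; left; rfl⟩
            · rcases Finset.mem_insert.1 hw with rfl | hw
              · exact ⟨Sym2.mk v w, Finset.mem_insert_self _ _,
                  by rw [Sym2.mem_iff]; right; rfl⟩
              · rw [Finset.mem_singleton.1 hw]
                exact ⟨Sym2.mk v b, Finset.mem_insert_of_mem (Finset.mem_singleton_self _),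
                  by rw [Sym2.mem_iff]; right; rfl⟩
        have hcard3 : (supp C₀).card = 3 := by
          rw [hsuppC]
          rw [Finset.card_insert_of_notMem (by
            rw [Finset.mem_insert, Finset.mem_singleton]
            push_neg
            exact ⟨hva, hvb⟩)]
          rw [Finset.card_insert_of_notMem (by rw [Finset.mem_singleton]; exact hab)]
          rfl
        refine supp_all_le hk G' hstar C₀ hC₀E ?_ ?_
        · rw [hcard3]
          rw [Nat.not_odd_iff_even, Nat.even_iff] at hko
          omega
        · rw [hcard3]; omega
      · right
        push_neg at hd2
        refine ⟨hko, fun v => ?_⟩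
        rw [Finset.card_le_one]
        intro a ha b hb
        by_contra hne
        exact hd2 v a b hne (Finset.mem_filter.1 ha).2 (Finset.mem_filter.1 hb).2
  rcases hmain with hs | ⟨hke, hmatch⟩
  · -- G' lives on at most k vertices
    have hle : G' ≤ cliqueOn (supp G'.edgeFinset) := by
      intro x w hadj
      refine ⟨hadj.ne, ?_, ?_⟩
      · exact mem_supp.2 ⟨Sym2.mk x w,
          SimpleGraph.mem_edgeFinset.2 ((SimpleGraph.mem_edgeSet G').2 hadj),
          by rw [Sym2.mem_iff]; left; rfl⟩
      · exact mem_supp.2 ⟨Sym2.mk x w,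
          SimpleGraph.mem_edgeFinset.2 ((SimpleGraph.mem_edgeSet G').2 hadj),
          by rw [Sym2.mem_iff]; right; rfl⟩
    have hcount : G'.edgeFinset.card ≤ k.choose 2 := by
      calc G'.edgeFinset.card ≤ (cliqueOn (supp G'.edgeFinset)).edgeFinset.card :=
            Finset.card_le_card (SimpleGraph.edgeFinset_mono hle)
        _ = (supp G'.edgeFinset).card.choose 2 := card_edgeFinset_cliqueOn _
        _ ≤ k.choose 2 := Nat.choose_le_choose 2 hs
    split_ifs with hif
    · exact hcount
    · push_neg at hif
      refine le_trans hcount ?_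
      rw [Nat.choose_two_right]
      refine Nat.div_le_div_right (Nat.mul_le_mul_left k ?_)
      omega
  · -- G' is a matching
    have hdeg : ∀ v, G'.degree v ≤ 1 := by
      intro v
      rw [← SimpleGraph.card_neighborFinset_eq_degree]
      refine le_trans (Finset.card_le_card ?_) (hmatch v)
      intro w hw
      rw [SimpleGraph.mem_neighborFinset] at hw
      exact Finset.mem_filter.2 ⟨Finset.mem_univ _, hw⟩
    have hsum := SimpleGraph.sum_degrees_eq_twice_card_edges G'
    have hsle : ∑ v, G'.degree v ≤ N := by
      calc ∑ v, G'.degree v ≤ ∑ _v : Fin N, 1 := Finset.sum_le_sum (fun v _ => hdeg v)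
        _ = N := by simp
    obtain ⟨m, hm⟩ := Nat.not_odd_iff_even.1 hke
    have hkn : k*(n-1) = 2*(m*(n-1)) := by rw [hm]; ring
    have hEle : G'.edgeFinset.card ≤ k*(n-1)/2 := by omega
    split_ifs with hif
    · refine le_trans hEle ?_
      have hnk : n ≤ k := by
        rcases hif with h | h
        · exact h
        · exact absurd h hke
      rw [Nat.choose_two_right]
      exact Nat.div_le_div_right (Nat.mul_le_mul_left k (by omega))
    · exact hEle

lemma edge_bound_of_arrows {k n N : ℕ} (hk : 2 ≤ k) (hn : 2 ≤ n) (hN : N = k*(n-1)+1)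
    (F : SimpleGraph (Fin N)) (harr : Arrows F (_root_.starGraph k) (⊤ : SimpleGraph (Fin n))) :
    (Fᶜ).edgeSet.ncard ≤ (if n ≤ k ∨ Odd k then k.choose 2 else k*(n-1)/2) := by
  refine edge_bound_aux hk hn hN Fᶜ ?_
  intro T hT
  by_contra hcon
  push_neg at hcon
  refine starProp_of_arrows hk hn hN F harr T hT ?_
  intro v hv
  obtain ⟨u, hu, hadj⟩ := hcon v hv
  rw [SimpleGraph.compl_adj] at hadj
  exact ⟨u, hu, hadj.1, hadj.2⟩
lemma ncard_edgeSet_add_compl' {V : Type*} [Fintype V] [DecidableEq V] (H : SimpleGraph V) :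
    H.edgeSet.ncard + Hᶜ.edgeSet.ncard = (Fintype.card V).choose 2 := by
  rw [← SimpleGraph.coe_edgeFinset, ← SimpleGraph.coe_edgeFinset,
    Set.ncard_coe_finset, Set.ncard_coe_finset]
  exact card_edgeFinset_add_compl H

lemma ncard_compl_cliqueOn {N : ℕ} (S : Finset (Fin N)) :
    ((cliqueOn S)ᶜ).edgeSet.ncard = N.choose 2 - S.card.choose 2 := by
  have h1 := ncard_edgeSet_add_compl' (cliqueOn S)
  rw [Fintype.card_fin] at h1
  have h2 : (cliqueOn S).edgeSet.ncard = S.card.choose 2 := by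
    rw [← SimpleGraph.coe_edgeFinset, Set.ncard_coe_finset]
    exact card_edgeFinset_cliqueOn S
  omega

lemma ncard_compl_matchG {N : ℕ} (hN : Odd N) :
    ((matchG N)ᶜ).edgeSet.ncard = N.choose 2 - (N-1)/2 := by
  have h1 := ncard_edgeSet_add_compl' (matchG N)
  rw [Fintype.card_fin] at h1
  have h2 : (matchG N).edgeSet.ncard = (N-1)/2 := by
    rw [← SimpleGraph.coe_edgeFinset, Set.ncard_coe_finset]
    exact card_edgeFinset_matchG hN
  omega

theorem stmt4 (k n : ℕ) (hk : 2 ≤ k) (hn : 2 ≤ n) :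
    restrictedSizeRamsey (_root_.starGraph k) (⊤ : SimpleGraph (Fin n)) =
      if n ≤ k ∨ Odd k then (k*(n-1)+1).choose 2 - k.choose 2
      else (k*(n-1)+1).choose 2 - k*(n-1)/2 := by
  have hram := ramsey_eq hk hn
  unfold restrictedSizeRamsey
  rw [hram]
  have hconstr : ∃ F : SimpleGraph (Fin (k*(n-1)+1)),
      Arrows F (_root_.starGraph k) (⊤ : SimpleGraph (Fin n)) ∧
      F.edgeSet.ncard = (if n ≤ k ∨ Odd k then (k*(n-1)+1).choose 2 - k.choose 2
        else (k*(n-1)+1).choose 2 - k*(n-1)/2) := by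
    by_cases hif : n ≤ k ∨ Odd k
    · have hkN : k ≤ (univ : Finset (Fin (k*(n-1)+1))).card := by
        rw [Finset.card_univ, Fintype.card_fin]
        have := Nat.mul_le_mul_left k (show 1 ≤ n-1 by omega)
        omega
      obtain ⟨S, -, hS⟩ := Finset.exists_subset_card_eq hkN
      refine ⟨(cliqueOn S)ᶜ, arrows_compl_clique hk hn rfl S hS, ?_⟩
      rw [ncard_compl_cliqueOn, hS, if_pos hif]
    · push_neg at hif
      have hke : Even k := Nat.not_odd_iff_even.1 hif.2
      have hNodd : Odd (k*(n-1)+1) := by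
        rcases hke with ⟨m, hm⟩
        exact ⟨m*(n-1), by rw [hm]; ring⟩
      refine ⟨(matchG (k*(n-1)+1))ᶜ, arrows_compl_match hk hn hke rfl, ?_⟩
      rw [ncard_compl_matchG hNodd, if_neg (by push_neg; exact hif)]
      have hNm : k*(n-1)+1-1 = k*(n-1) := by omega
      rw [hNm]
  obtain ⟨F₀, harr₀, hcount₀⟩ := hconstr
  apply le_antisymm
  · exact Nat.sInf_le ⟨F₀, harr₀, hcount₀⟩
  · refine le_csInf ⟨_, F₀, harr₀, hcount₀⟩ ?_
    rintro m ⟨F, harr, hcount⟩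
    have hbound := edge_bound_of_arrows hk hn rfl F harr
    have hsum := ncard_edgeSet_add_compl' F
    rw [Fintype.card_fin] at hsum
    split_ifs at hbound ⊢ with hif
    · omega
    · omega
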